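/- Let A be a commutative bialgebra generated as an algebra by a subspace V, and let • be a bilinear product on A satisfying the Leibniz identity (ab)•c = (a•c)b + a(b•c) for all a,b,c ∈ A. If for all x ∈ V and b,c ∈ A the preLie identity (x•b)•c - x•(b•c) = (x•c)•b - x•(c•b) holds and Δ(x•b) = x⁽¹⁾⊗(x⁽²⁾•b) + (x⁽¹⁾•b⁽¹⁾)⊗(x⁽²⁾b⁽²⁾), then these two identities hold for all a ∈ A in place of x; i.e., A is a Com-PreLie bialgebra. -/

import Mathlib

set_option synthInstance.maxHeartbeats 1000000
set_option maxHeartbeats 1600000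
open TensorProduct

section aux
variable {K A : Type*} [Field K] [CommRing A] [Bialgebra K A]
variable (bul : A →ₗ[K] A →ₗ[K] A)

lemma aux_id1 (hleib : ∀ a b c : A, bul (a * b) c = bul a c * b + a * bul b c)
    (b : A) (cu cv : A ⊗[K] A) :
    TensorProduct.map LinearMap.id (bul.flip b) (cu * cv)
      = TensorProduct.map LinearMap.id (bul.flip b) cu * cv
        + cu * TensorProduct.map LinearMap.id (bul.flip b) cv := by
  induction cu using TensorProduct.induction_on with
  | zero => simp
  | tmul u1 u2 =>
    induction cv using TensorProduct.induction_on with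
    | zero => simp
    | tmul v1 v2 =>
      simp [Algebra.TensorProduct.tmul_mul_tmul, hleib, tmul_add]
    | add x y hx hy =>
      simp only [mul_add, hx, hy, map_add, add_mul]
      abel
  | add x y hx hy =>
    simp only [add_mul, hx, hy, map_add, mul_add]
    abel

lemma aux_id2 (hleib : ∀ a b c : A, bul (a * b) c = bul a c * b + a * bul b c)
    (db cu cv : A ⊗[K] A) :
    TensorProduct.map (TensorProduct.lift bul) (LinearMap.mul' K A)
        (TensorProduct.tensorTensorTensorComm K A A A A ((cu * cv) ⊗ₜ[K] db))
      = TensorProduct.map (TensorProduct.lift bul) (LinearMap.mul' K A)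
          (TensorProduct.tensorTensorTensorComm K A A A A (cu ⊗ₜ[K] db)) * cv
        + cu * TensorProduct.map (TensorProduct.lift bul) (LinearMap.mul' K A)
            (TensorProduct.tensorTensorTensorComm K A A A A (cv ⊗ₜ[K] db)) := by
  induction db using TensorProduct.induction_on with
  | zero =>
    simp only [tmul_zero, LinearEquiv.map_zero, map_zero, mul_zero, zero_mul, add_zero]
  | tmul b1 b2 =>
    induction cu using TensorProduct.induction_on with
    | zero =>
      simp only [zero_mul, zero_tmul, LinearEquiv.map_zero, map_zero, mul_zero, zero_add]
    | tmul u1 u2 =>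
      induction cv using TensorProduct.induction_on with
      | zero =>
        simp only [mul_zero, zero_tmul, LinearEquiv.map_zero, map_zero, zero_mul, add_zero]
      | tmul v1 v2 =>
        simp [Algebra.TensorProduct.tmul_mul_tmul, tensorTensorTensorComm_tmul,
          LinearMap.mul'_apply, hleib, add_tmul, mul_comm, mul_left_comm]
      | add x y hx hy =>
        simp only [mul_add, add_tmul, map_add, hx, hy, add_mul]
        abel
    | add x y hx hy =>
      simp only [add_mul, add_tmul, map_add, hx, hy, mul_add]
      abel
  | add x y hx hy =>
    simp only [tmul_add, map_add, hx, hy, mul_add, add_mul]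
    abel

lemma aux_one (hleib : ∀ a b c : A, bul (a * b) c = bul a c * b + a * bul b c)
    (c : A) : bul 1 c = 0 := by
  have h := hleib 1 1 c
  simp only [one_mul, mul_one] at h
  exact (right_eq_add.mp h)

lemma aux_id2_one (hleib : ∀ a b c : A, bul (a * b) c = bul a c * b + a * bul b c)
    (db : A ⊗[K] A) :
    TensorProduct.map (TensorProduct.lift bul) (LinearMap.mul' K A)
        (TensorProduct.tensorTensorTensorComm K A A A A (((1:A) ⊗ₜ[K] (1:A)) ⊗ₜ[K] db)) = 0 := by
  induction db using TensorProduct.induction_on with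
  | zero =>
    simp only [tmul_zero, LinearEquiv.map_zero, map_zero]
  | tmul b1 b2 => simp [aux_one bul hleib]
  | add x y hx hy => simp only [tmul_add, map_add, hx, hy, add_zero]

end aux

theorem comPreLie_of_generators {K A : Type*} [Field K] [CharZero K]
    [CommRing A] [Bialgebra K A]
    (V : Submodule K A) (hgen : Algebra.adjoin K (V : Set A) = ⊤)
    (bul : A →ₗ[K] A →ₗ[K] A)
    (hleib : ∀ a b c : A, bul (a * b) c = bul a c * b + a * bul b c)
    (hpreV : ∀ x ∈ V, ∀ b c : A,
      bul (bul x b) c - bul x (bul b c) = bul (bul x c) b - bul x (bul c b))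
    (hcompatV : ∀ x ∈ V, ∀ b : A, Coalgebra.comul (R := K) (bul x b) =
      TensorProduct.map LinearMap.id (bul.flip b) (Coalgebra.comul (R := K) x)
      + TensorProduct.map (TensorProduct.lift bul) (LinearMap.mul' K A)
          (TensorProduct.tensorTensorTensorComm K A A A A
            (Coalgebra.comul (R := K) x ⊗ₜ[K] Coalgebra.comul (R := K) b))) :
    (∀ a b c : A,
      bul (bul a b) c - bul a (bul b c) = bul (bul a c) b - bul a (bul c b)) ∧
    (∀ a b : A, Coalgebra.comul (R := K) (bul a b) =
      TensorProduct.map LinearMap.id (bul.flip b) (Coalgebra.comul (R := K) a)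
      + TensorProduct.map (TensorProduct.lift bul) (LinearMap.mul' K A)
          (TensorProduct.tensorTensorTensorComm K A A A A
            (Coalgebra.comul (R := K) a ⊗ₜ[K] Coalgebra.comul (R := K) b))) := by
  have h1 : ∀ c : A, bul 1 c = 0 := aux_one bul hleib
  have hmem : ∀ a : A, a ∈ Algebra.adjoin K (V : Set A) := by
    intro a; rw [hgen]; trivial
  constructor
  · intro a
    refine Algebra.adjoin_induction (hx := hmem a)
      (fun x hx => hpreV x hx) ?_ ?_ ?_
    · intro r b c
      rw [Algebra.algebraMap_eq_smul_one]
      simp [h1, map_smul]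
    · intro x y _ _ hx hy b c
      simp only [map_add, LinearMap.add_apply]
      linear_combination hx b c + hy b c
    · intro u v _ _ hu hv b c
      simp only [hleib, map_add, LinearMap.add_apply]
      linear_combination v * hu b c + u * hv b c
  · intro a
    refine Algebra.adjoin_induction (hx := hmem a)
      (fun x hx => hcompatV x hx) ?_ ?_ ?_
    · intro r b
      have hb : bul ((algebraMap K A) r) b = 0 := by
        rw [Algebra.algebraMap_eq_smul_one, map_smul, LinearMap.smul_apply, h1, smul_zero]
      rw [hb, map_zero, Algebra.algebraMap_eq_smul_one, map_smul, Bialgebra.comul_one,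
        Algebra.TensorProduct.one_def, map_smul, ← smul_tmul', LinearEquiv.map_smul, map_smul,
        aux_id2_one bul hleib, smul_zero, add_zero, map_tmul]
      simp [h1]
    · intro x y _ _ hx hy b
      simp only [map_add, LinearMap.add_apply, add_tmul]
      rw [hx b, hy b]
      abel
    · intro u v _ _ hu hv b
      simp only [hleib, map_add, Bialgebra.comul_mul]
      rw [hu b, hv b, aux_id1 bul hleib, aux_id2 bul hleib]
      ring
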